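/- For l > 0 and A(x) = (12(l²−1)x − 6(l²−2l−1))/(l²+4l+1), and every t ∈ [0,1]: ∫_t¹ (1+(l−1)x)·A(x)·(x−t) dx ≤ l(1−t), with equality only at t = 0 and t = 1. -/

import Mathlib

private lemma trap_R_pos (l t : ℝ) (hl : 0 < l) (ht0 : 0 ≤ t) (ht1 : t ≤ 1) :
    0 < (l - 1) ^ 2 * (l + 1) * t ^ 2 + 2 * (2 * l + 1) * (l - 1) * t + (l ^ 2 + 4 * l + 1) := by
  have h2 : 0 < 2 * (l - 1) * t + l + 3 := by
    nlinarith [mul_nonneg (sub_nonneg.2 ht1) (show (0:ℝ) ≤ l + 3 by linarith),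
      mul_nonneg ht0 (show (0:ℝ) ≤ 3 * l + 1 by linarith)]
  nlinarith [mul_nonneg (show (0:ℝ) ≤ l + 1 by linarith) (sq_nonneg ((l - 1) * t + 1)),
    mul_pos hl h2]

theorem trapezium_quartic_estimate
    (l : ℝ) (hl : 0 < l)
    (A : ℝ → ℝ)
    (hA : ∀ x, A x = (12 * (l ^ 2 - 1) * x - 6 * (l ^ 2 - 2 * l - 1)) / (l ^ 2 + 4 * l + 1)) :
    ∀ t ∈ Set.Icc (0:ℝ) 1,
      (∫ x in t..1, (1 + (l - 1) * x) * A x * (x - t)) ≤ l * (1 - t) ∧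
      ((∫ x in t..1, (1 + (l - 1) * x) * A x * (x - t)) = l * (1 - t) → t = 0 ∨ t = 1) := by
  intro t ht
  obtain ⟨ht0, ht1⟩ := ht
  have hd : (0:ℝ) < l ^ 2 + 4 * l + 1 := by nlinarith
  have hdne : (l ^ 2 + 4 * l + 1) ≠ 0 := ne_of_gt hd
  -- abbreviations
  set a : ℝ := 12 * (l ^ 2 - 1) with ha
  set b : ℝ := -(6 * (l ^ 2 - 2 * l - 1)) with hb
  -- the integrand as a polynomial over the constant denominator
  have hint : ∀ x : ℝ, (1 + (l - 1) * x) * A x * (x - t)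
      = ((l - 1) * a * x ^ 3 + (a + (l - 1) * b - t * ((l - 1) * a)) * x ^ 2
          + (b - t * (a + (l - 1) * b)) * x - t * b) / (l ^ 2 + 4 * l + 1) := by
    intro x
    rw [hA, ha, hb]
    field_simp
    ring
  -- antiderivative
  set F : ℝ → ℝ := fun y =>
      ((l - 1) * a * y ^ 4 / 4 + (a + (l - 1) * b - t * ((l - 1) * a)) * y ^ 3 / 3
        + (b - t * (a + (l - 1) * b)) * y ^ 2 / 2 - t * b * y) / (l ^ 2 + 4 * l + 1) with hF
  have hderiv : ∀ x ∈ Set.uIcc t 1,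
      HasDerivAt F ((1 + (l - 1) * x) * A x * (x - t)) x := by
    intro x _
    rw [hint x]
    have hnum : HasDerivAt (fun y : ℝ =>
        (l - 1) * a * y ^ 4 / 4 + (a + (l - 1) * b - t * ((l - 1) * a)) * y ^ 3 / 3
          + (b - t * (a + (l - 1) * b)) * y ^ 2 / 2 - t * b * y)
        ((l - 1) * a * x ^ 3 + (a + (l - 1) * b - t * ((l - 1) * a)) * x ^ 2
          + (b - t * (a + (l - 1) * b)) * x - t * b) x := by
      have h4 := (hasDerivAt_pow 4 x).const_mul ((l - 1) * a)
      have h3 := (hasDerivAt_pow 3 x).const_mul (a + (l - 1) * b - t * ((l - 1) * a))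
      have h2 := (hasDerivAt_pow 2 x).const_mul (b - t * (a + (l - 1) * b))
      have h1 := (hasDerivAt_id x).const_mul (t * b)
      have := (((h4.div_const 4).add (h3.div_const 3)).add (h2.div_const 2)).sub h1
      refine this.congr_deriv ?_
      push_cast
      ring
    exact hnum.div_const _
  have hcont : IntervalIntegrable (fun x => (1 + (l - 1) * x) * A x * (x - t))
      MeasureTheory.volume t 1 := by
    have : Continuous fun x : ℝ => ((l - 1) * a * x ^ 3
        + (a + (l - 1) * b - t * ((l - 1) * a)) * x ^ 2
        + (b - t * (a + (l - 1) * b)) * x - t * b) / (l ^ 2 + 4 * l + 1) := by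
      fun_prop
    exact ((this.congr fun x => (hint x).symm).intervalIntegrable t 1)
  have hI : (∫ x in t..1, (1 + (l - 1) * x) * A x * (x - t)) = F 1 - F t :=
    intervalIntegral.integral_eq_sub_of_hasDerivAt hderiv hcont
  -- the key algebraic identity
  have hkey : l * (1 - t) - (F 1 - F t)
      = t * (1 - t) * ((l - 1) ^ 2 * (l + 1) * t ^ 2 + 2 * (2 * l + 1) * (l - 1) * t
          + (l ^ 2 + 4 * l + 1)) / (l ^ 2 + 4 * l + 1) := by
    rw [hF, ha, hb]
    simp only
    field_simp
    ring
  have hR := trap_R_pos l t hl ht0 ht1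
  constructor
  · rw [hI]
    nlinarith [mul_nonneg (mul_nonneg ht0 (sub_nonneg.2 ht1)) hR.le,
      div_nonneg (mul_nonneg (mul_nonneg ht0 (sub_nonneg.2 ht1)) hR.le) hd.le]
  · intro heq
    rw [hI] at heq
    have h0 : t * (1 - t) * ((l - 1) ^ 2 * (l + 1) * t ^ 2 + 2 * (2 * l + 1) * (l - 1) * t
        + (l ^ 2 + 4 * l + 1)) / (l ^ 2 + 4 * l + 1) = 0 := by
      rw [← hkey, heq]; ring
    have h1 : t * (1 - t) = 0 := by
      rcases mul_eq_zero.1 ((div_eq_zero_iff.1 h0).resolve_right hdne) with h | h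
      · exact h
      · exact absurd h hR.ne'
    rcases mul_eq_zero.1 h1 with h | h
    · exact Or.inl h
    · exact Or.inr (by linarith)
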